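/- Discrete-time Pontryagin necessary conditions (costate backward recursion): for the optimal control problem min Σ_{k=0}^{m−1} L(x_k,u_k) + φ(x_m) subject to x_{k+1} = f(x_k,u_k), if (x*, u*) is optimal with f, L, φ differentiable, then there exist costates λ_0,...,λ_m with λ_m = ∂φ/∂x(x_m), λ_k = (∂f/∂x(x_k,u_k))ᵀ λ_{k+1} + ∂L/∂x(x_k,u_k), and (∂f/∂u(x_k,u_k))ᵀ λ_{k+1} + ∂L/∂u(x_k,u_k) = 0 for k = 0,...,m−1. -/

import Mathlib

open Matrix

/-- Trajectory of a discrete-time control system. -/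
def traj {X U : Type*} (f : X → U → X) (x0 : X) (u : ℕ → U) : ℕ → X
  | 0 => x0
  | k + 1 => f (traj f x0 u k) (u k)

namespace DPaux

variable {n p : ℕ}

/-- Cost-to-go with `s` remaining steps, control sequence `c`, terminal cost `φ`. -/
def cost (f : (Fin n → ℝ) → (Fin p → ℝ) → (Fin n → ℝ))
    (L : (Fin n → ℝ) → (Fin p → ℝ) → ℝ) (φ : (Fin n → ℝ) → ℝ) :
    ℕ → (ℕ → (Fin p → ℝ)) → (Fin n → ℝ) → ℝ
  | 0, _, x => φ x
  | s+1, c, x => L x (c 0) + cost f L φ s (fun j => c (j+1)) (f x (c 0))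

lemma traj_shift (f : (Fin n → ℝ) → (Fin p → ℝ) → (Fin n → ℝ))
    (x : Fin n → ℝ) (c : ℕ → (Fin p → ℝ)) :
    ∀ s, traj f (f x (c 0)) (fun j => c (j+1)) s = traj f x c (s+1)
  | 0 => rfl
  | s+1 => by
    show f (traj f (f x (c 0)) (fun j => c (j+1)) s) (c (s+1)) = _
    rw [traj_shift f x c s]; rfl

lemma cost_eq (f : (Fin n → ℝ) → (Fin p → ℝ) → (Fin n → ℝ))
    (L : (Fin n → ℝ) → (Fin p → ℝ) → ℝ) (φ : (Fin n → ℝ) → ℝ) :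
    ∀ (s : ℕ) (c : ℕ → (Fin p → ℝ)) (x : Fin n → ℝ),
      cost f L φ s c x =
        φ (traj f x c s) + ∑ j ∈ Finset.range s, L (traj f x c j) (c j)
  | 0, c, x => by simp [cost, traj]
  | s+1, c, x => by
    rw [show cost f L φ (s+1) c x
        = L x (c 0) + cost f L φ s (fun j => c (j+1)) (f x (c 0)) from rfl,
      cost_eq f L φ s (fun j => c (j+1)) (f x (c 0))]
    rw [Finset.sum_range_succ' (fun j => L (traj f x c j) (c j)) s]
    have h1 : ∀ j, traj f (f x (c 0)) (fun j => c (j+1)) j = traj f x c (j+1) :=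
      traj_shift f x c
    simp only [h1]
    simp only [show traj f x c 0 = x from rfl]
    ring

variable {f : (Fin n → ℝ) → (Fin p → ℝ) → (Fin n → ℝ)}
    {L : (Fin n → ℝ) → (Fin p → ℝ) → ℝ} {φ : (Fin n → ℝ) → ℝ}
    (hf : ContDiff ℝ 1 (fun q : (Fin n → ℝ) × (Fin p → ℝ) => f q.1 q.2))
    (hL : ContDiff ℝ 1 (fun q : (Fin n → ℝ) × (Fin p → ℝ) => L q.1 q.2))
    (hφ : ContDiff ℝ 1 φ)

include hf hL hφ in
lemma cost_contDiff : ∀ (s : ℕ) (c : ℕ → (Fin p → ℝ)), ContDiff ℝ 1 (cost f L φ s c)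
  | 0, c => hφ
  | s+1, c => by
    have h1 : ContDiff ℝ 1 (fun x : Fin n → ℝ => L x (c 0)) :=
      hL.comp (contDiff_id.prodMk contDiff_const)
    have h2 : ContDiff ℝ 1 (fun x : Fin n → ℝ => f x (c 0)) :=
      hf.comp (contDiff_id.prodMk contDiff_const)
    exact h1.add ((cost_contDiff s (fun j => c (j+1))).comp h2)

include hf hL hφ in
lemma fderiv_cost_succ (s : ℕ) (c : ℕ → (Fin p → ℝ)) (x : Fin n → ℝ) (w : Fin n → ℝ) :
    fderiv ℝ (cost f L φ (s+1) c) x w =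
      fderiv ℝ (fun y => L y (c 0)) x w +
        fderiv ℝ (cost f L φ s (fun j => c (j+1))) (f x (c 0))
          (fderiv ℝ (fun y => f y (c 0)) x w) := by
  have h1 : ContDiff ℝ 1 (fun x : Fin n → ℝ => L x (c 0)) :=
    hL.comp (contDiff_id.prodMk contDiff_const)
  have h2 : ContDiff ℝ 1 (fun x : Fin n → ℝ => f x (c 0)) :=
    hf.comp (contDiff_id.prodMk contDiff_const)
  have h3 := cost_contDiff hf hL hφ s (fun j => c (j+1))
  have hd1 : DifferentiableAt ℝ (fun y : Fin n → ℝ => L y (c 0)) x :=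
    h1.differentiable one_ne_zero x
  have hd2 : DifferentiableAt ℝ (fun y : Fin n → ℝ => f y (c 0)) x :=
    h2.differentiable one_ne_zero x
  have hd3 : DifferentiableAt ℝ (cost f L φ s (fun j => c (j+1))) (f x (c 0)) :=
    h3.differentiable one_ne_zero _
  have e : cost f L φ (s+1) c
      = fun y => L y (c 0) + cost f L φ s (fun j => c (j+1)) (f y (c 0)) := rfl
  have hd4 : DifferentiableAt ℝ
      (fun y => cost f L φ s (fun j => c (j+1)) (f y (c 0))) x := hd3.comp x hd2
  rw [e, fderiv_fun_add hd1 hd4]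
  have hcc : fderiv ℝ (fun y => cost f L φ s (fun j => c (j+1)) (f y (c 0))) x
      = (fderiv ℝ (cost f L φ s (fun j => c (j+1))) (f x (c 0))).comp
          (fderiv ℝ (fun y => f y (c 0)) x) := by
    have := fderiv_comp x hd3 hd2
    rwa [Function.comp_def] at this
  rw [ContinuousLinearMap.add_apply, hcc, ContinuousLinearMap.comp_apply]

lemma dot_single (Λ : (Fin n → ℝ) →L[ℝ] ℝ) (w : Fin n → ℝ) :
    (fun i => Λ (Pi.single i 1)) ⬝ᵥ w = Λ w := by
  conv_rhs => rw [show w = ∑ i, Pi.single i (w i) from (Finset.univ_sum_single w).symm]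
  rw [map_sum, dotProduct]
  refine Finset.sum_congr rfl fun i _ => ?_
  have h : Pi.single i (w i) = w i • (Pi.single i 1 : Fin n → ℝ) := by
    rw [← Pi.single_smul]; norm_num
  rw [h, Λ.map_smul, smul_eq_mul, mul_comm]

end DPaux

theorem discrete_pontryagin (n p m : ℕ)
    (f : (Fin n → ℝ) → (Fin p → ℝ) → (Fin n → ℝ))
    (L : (Fin n → ℝ) → (Fin p → ℝ) → ℝ) (φ : (Fin n → ℝ) → ℝ)
    (hf : ContDiff ℝ 1 (fun q : (Fin n → ℝ) × (Fin p → ℝ) => f q.1 q.2))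
    (hL : ContDiff ℝ 1 (fun q : (Fin n → ℝ) × (Fin p → ℝ) => L q.1 q.2))
    (hφ : ContDiff ℝ 1 φ)
    (x0 : Fin n → ℝ) (u : ℕ → (Fin p → ℝ))
    (J : (ℕ → (Fin p → ℝ)) → ℝ)
    (hJ : J = fun v => φ (traj f x0 v m) +
      ∑ k ∈ Finset.range m, L (traj f x0 v k) (v k))
    (hopt : ∀ v : ℕ → (Fin p → ℝ), J u ≤ J v) :
    ∃ lam : ℕ → (Fin n → ℝ),
      (∀ w : Fin n → ℝ, lam m ⬝ᵥ w = fderiv ℝ φ (traj f x0 u m) w) ∧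
      (∀ k < m, ∀ w : Fin n → ℝ,
        lam k ⬝ᵥ w =
          lam (k+1) ⬝ᵥ fderiv ℝ (fun x => f x (u k)) (traj f x0 u k) w +
            fderiv ℝ (fun x => L x (u k)) (traj f x0 u k) w) ∧
      (∀ k < m, ∀ w : Fin p → ℝ,
        lam (k+1) ⬝ᵥ fderiv ℝ (fun v => f (traj f x0 u k) v) (u k) w +
          fderiv ℝ (fun v => L (traj f x0 u k) v) (u k) w = 0) := by
  classical
  set Λ : ℕ → ((Fin n → ℝ) →L[ℝ] ℝ) := fun k =>
    fderiv ℝ (DPaux.cost f L φ (m - k) (fun j => u (k + j))) (traj f x0 u k) with hΛ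
  refine ⟨fun k i => Λ k (Pi.single i 1), ?_, ?_, ?_⟩
  · -- terminal condition
    intro w
    rw [DPaux.dot_single]
    simp only [hΛ, Nat.sub_self]
    rfl
  · -- backward recursion
    intro k hk w
    rw [DPaux.dot_single, DPaux.dot_single]
    have hs : m - k = (m - (k+1)) + 1 := by omega
    have hΛk : Λ k w = fderiv ℝ (fun y => L y (u k)) (traj f x0 u k) w +
        Λ (k+1) (fderiv ℝ (fun y => f y (u k)) (traj f x0 u k) w) := by
      have hc : (fun j => u (k + (j+1))) = fun j => u ((k+1) + j) := by
        funext j; exact congrArg u (by omega)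
      have := DPaux.fderiv_cost_succ hf hL hφ (m - (k+1)) (fun j => u (k + j))
        (traj f x0 u k) w
      simp only [hΛ, hs]
      rw [this]
      have h0 : u (k + 0) = u k := by norm_num
      rw [h0, hc]
      rfl
    rw [hΛk]; ring
  · -- stationarity
    intro k hk w
    rw [DPaux.dot_single]
    set xk := traj f x0 u k with hxk
    set c' : ℕ → (Fin p → ℝ) := fun j => u ((k+1) + j) with hc'
    -- trajectory under update, below k
    have htraj_le : ∀ a, ∀ j ≤ k, traj f x0 (Function.update u k a) j = traj f x0 u j := by
      intro a j hj
      induction j with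
      | zero => rfl
      | succ i ih =>
        show f (traj f x0 (Function.update u k a) i) (Function.update u k a i) = _
        rw [ih (by omega), Function.update_of_ne (by omega)]
        rfl
    -- trajectory under update, above k
    have htraj_gt : ∀ a s, traj f x0 (Function.update u k a) (k+1+s)
        = traj f (f xk a) c' s := by
      intro a s
      induction s with
      | zero =>
        show f (traj f x0 (Function.update u k a) k) (Function.update u k a k) = f xk a
        rw [htraj_le a k le_rfl, Function.update_self]
      | succ s ih =>
        have e : k+1+(s+1) = (k+1+s)+1 := rfl
        rw [e]
        show f (traj f x0 (Function.update u k a) (k+1+s)) (Function.update u k a (k+1+s))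
            = f (traj f (f xk a) c' s) (c' s)
        rw [ih, Function.update_of_ne (by omega)]
    -- decomposition of J
    have hJdecomp : ∀ a, J (Function.update u k a)
        = (∑ j ∈ Finset.range k, L (traj f x0 u j) (u j))
          + (L xk a + DPaux.cost f L φ (m - (k+1)) c' (f xk a)) := by
      intro a
      rw [hJ]
      simp only
      rw [DPaux.cost_eq]
      have hφterm : traj f x0 (Function.update u k a) m
          = traj f (f xk a) c' (m - (k+1)) := by
        have e : traj f x0 (Function.update u k a) m
            = traj f x0 (Function.update u k a) (k+1+(m-(k+1))) := by
          congr 1; omega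
        rw [e, htraj_gt a]
      have hsplit : ∑ j ∈ Finset.range m, L (traj f x0 (Function.update u k a) j)
            (Function.update u k a j)
          = (∑ j ∈ Finset.range k, L (traj f x0 u j) (u j)) + L xk a
            + ∑ j ∈ Finset.range (m - (k+1)), L (traj f (f xk a) c' j) (c' j) := by
        rw [← Finset.sum_range_add_sum_Ico _ (show k + 1 ≤ m by omega),
          Finset.sum_range_succ]
        congr 1
        · congr 1
          · refine Finset.sum_congr rfl fun j hj => ?_
            rw [htraj_le a j (by simp at hj; omega),
              Function.update_of_ne (by simp at hj; omega)]
          · rw [htraj_le a k le_rfl, Function.update_self]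
        · rw [Finset.sum_Ico_eq_sum_range]
          refine Finset.sum_congr rfl fun j hj => ?_
          rw [htraj_gt a j, Function.update_of_ne (by omega)]
      rw [hφterm, hsplit]
      ring
    -- the scalar function of perturbation parameter
    set g : ℝ → ℝ := fun t =>
      L xk (u k + t • w) + DPaux.cost f L φ (m - (k+1)) c' (f xk (u k + t • w)) with hg
    have hmin : ∀ t, g 0 ≤ g t := by
      intro t
      have h1 := hopt (Function.update u k (u k + t • w))
      rw [hJdecomp] at h1
      have h2 : J u = (∑ j ∈ Finset.range k, L (traj f x0 u j) (u j)) + g 0 := by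
        have : u = Function.update u k (u k + (0:ℝ) • w) := by
          simp [Function.update_eq_self]
        conv_lhs => rw [this]
        rw [hJdecomp]
      rw [h2] at h1
      simp only [hg] at h1 ⊢
      linarith
    -- differentiability ingredients
    have hcurve : HasDerivAt (fun t : ℝ => u k + t • w) w 0 := by
      simpa using ((hasDerivAt_id (0:ℝ)).smul_const w).const_add (u k)
    have h00 : u k + (0:ℝ) • w = u k := by simp
    have hLu : DifferentiableAt ℝ (fun v => L xk v) (u k) :=
      ((hL.comp (contDiff_const.prodMk contDiff_id)).differentiable one_ne_zero) (u k)
    have hfu : DifferentiableAt ℝ (fun v => f xk v) (u k) :=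
      ((hf.comp (contDiff_const.prodMk contDiff_id)).differentiable one_ne_zero) (u k)
    have hV : DifferentiableAt ℝ (DPaux.cost f L φ (m - (k+1)) c') (f xk (u k)) :=
      ((DPaux.cost_contDiff hf hL hφ (m - (k+1)) c').differentiable one_ne_zero) _
    have hLu' : HasFDerivAt (fun v => L xk v) (fderiv ℝ (fun v => L xk v) (u k))
        (u k + (0:ℝ) • w) := by rw [h00]; exact hLu.hasFDerivAt
    have hcomp : HasFDerivAt (fun v => DPaux.cost f L φ (m - (k+1)) c' (f xk v))
        ((fderiv ℝ (DPaux.cost f L φ (m - (k+1)) c') (f xk (u k))).comp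
          (fderiv ℝ (fun v => f xk v) (u k))) (u k + (0:ℝ) • w) := by
      rw [h00]
      exact hV.hasFDerivAt.comp (u k) hfu.hasFDerivAt
    have hd1 : HasDerivAt (fun t : ℝ => L xk (u k + t • w))
        (fderiv ℝ (fun v => L xk v) (u k) w) 0 :=
      hLu'.comp_hasDerivAt 0 hcurve
    have hd2 : HasDerivAt (fun t : ℝ => DPaux.cost f L φ (m - (k+1)) c' (f xk (u k + t • w)))
        (fderiv ℝ (DPaux.cost f L φ (m - (k+1)) c') (f xk (u k))
          (fderiv ℝ (fun v => f xk v) (u k) w)) 0 :=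
      by have := HasFDerivAt.comp_hasDerivAt (l := fun v => DPaux.cost f L φ (m - (k+1)) c' (f xk v)) 0 hcomp hcurve; exact this
    have hgderiv : HasDerivAt g
        (fderiv ℝ (fun v => L xk v) (u k) w +
          fderiv ℝ (DPaux.cost f L φ (m - (k+1)) c') (f xk (u k))
            (fderiv ℝ (fun v => f xk v) (u k) w)) 0 := hd1.add hd2
    have hloc : IsLocalMin g 0 := Filter.Eventually.of_forall hmin
    have hzero := hloc.hasDerivAt_eq_zero hgderiv
    have hpt : traj f x0 u (k+1) = f xk (u k) := rfl
    simp only [hΛ, hpt, hc']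
    linarith [hzero]
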